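/- Let f be a formal power series (or analytic function) with f(0) = 1 satisfying f'(z) = -f(-z)². Define g(z) := -f(z)·f(-z). Then g satisfies the Weierstrass-type differential equation g'(z)² = 4·g(z)³ + 4. -/

import Mathlib

theorem stmt_3 (f : ℝ → ℝ) (ε : ℝ) (hε : 0 < ε) (h0 : f 0 = 1)
    (hf : ∀ z ∈ Set.Ioo (-ε) ε, HasDerivAt f (-(f (-z)) ^ 2) z)
    (g : ℝ → ℝ) (hg : ∀ z, g z = -(f z * f (-z))) :
    ∀ z ∈ Set.Ioo (-ε) ε, (deriv g z) ^ 2 = 4 * (g z) ^ 3 + 4 := by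
  intro z hz
  have hsym : ∀ w ∈ Set.Ioo (-ε) ε, -w ∈ Set.Ioo (-ε) ε := by
    intro w hw
    simp only [Set.mem_Ioo] at hw ⊢
    constructor <;> linarith [hw.1, hw.2]
  -- derivative of f(-z)
  have hF : ∀ w ∈ Set.Ioo (-ε) ε, HasDerivAt (fun x => f (-x)) ((f w) ^ 2) w := by
    intro w hw
    have h1 : HasDerivAt f (-(f (-(-w))) ^ 2) (-w) := hf (-w) (hsym w hw)
    have h2 := (h1.comp w (hasDerivAt_neg w))
    simpa [Function.comp_def] using h2
  -- h := f^3 + f(-·)^3 has zero derivative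
  set h : ℝ → ℝ := fun x => (f x)^3 + (f (-x))^3 with hh_def
  have hh : ∀ w ∈ Set.Ioo (-ε) ε, HasDerivAt h 0 w := by
    intro w hw
    have h1 := ((hf w hw).pow 3).add (((hF w hw)).pow 3)
    have h2 : HasDerivAt h (-(3 * f w ^ 2 * f (-w) ^ 2) + 3 * f (-w) ^ 2 * f w ^ 2) w := by
      simpa [hh_def, Pi.add_def, Pi.pow_def] using h1
    convert h2 using 1
    ring
  have hconst : h z = h 0 := by
    have hconv : Convex ℝ (Set.Ioo (-ε) ε) := convex_Ioo _ _
    have h0mem : (0 : ℝ) ∈ Set.Ioo (-ε) ε := by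
      simp only [Set.mem_Ioo]; constructor <;> linarith
    refine hconv.is_const_of_fderivWithin_eq_zero
      (fun w hw => ((hh w hw).differentiableAt).differentiableWithinAt) ?_ hz h0mem
    intro w hw
    rw [fderivWithin_of_isOpen isOpen_Ioo hw]
    have := (hh w hw).hasFDerivAt.fderiv
    rw [this]
    ext
    simp
  have key : (f z)^3 + (f (-z))^3 = 2 := by
    have h02 : h 0 = 2 := by simp [hh_def, h0]; norm_num
    have := hconst.trans h02
    simpa [hh_def] using this
  -- derivative of g
  have hg' : HasDerivAt g (f (-z) ^ 3 - f z ^ 3) z := by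
    have h1 : HasDerivAt (fun x => -(f x * f (-x)))
        (-((-(f (-z)) ^ 2) * f (-z) + f z * (f z ^ 2))) z :=
      ((hf z hz).mul (hF z hz)).neg
    have heq : (fun x => -(f x * f (-x))) = g := by
      funext x; rw [hg x]
    rw [heq] at h1
    convert h1 using 1
    ring
  rw [hg'.deriv, hg z]
  linear_combination ((f z)^3 + (f (-z))^3 + 2) * key
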